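/- Let $A$ be a commutative ring containing the field $\mathbb{Q}$ of rational numbers, and let $M$ be a flat $A$-module. Then for every $p \geq 0$, the exterior power $\wedge^p M$ is also a flat $A$-module. -/

import Mathlib

open scoped TensorProduct

/-- Tensor powers of a flat module are flat. -/
theorem flat_tensorPower {A : Type*} [CommRing A] (M : Type*) [AddCommGroup M] [Module A M]
    [Module.Flat A M] (p : ℕ) : Module.Flat A (⨂[A] (_ : Fin p), M) := by
  induction p with
  | zero =>
    exact Module.Flat.of_linearEquiv (PiTensorProduct.isEmptyEquiv (Fin 0))
  | succ n ih =>
    let e1 : (⨂[A] (_ : Fin (n + 1)), M) ≃ₗ[A] (⨂[A] (_ : Fin 1 ⊕ Fin n), M) :=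
      PiTensorProduct.reindex A (fun _ => M)
        ((finCongr (by omega)).trans finSumFinEquiv.symm)
    let e2 : (⨂[A] (_ : Fin 1 ⊕ Fin n), M) ≃ₗ[A]
        (⨂[A] (_ : Fin 1), M) ⊗[A] (⨂[A] (_ : Fin n), M) :=
      (PiTensorProduct.tmulEquiv A M).symm
    let e3 : (⨂[A] (_ : Fin 1), M) ⊗[A] (⨂[A] (_ : Fin n), M) ≃ₗ[A]
        M ⊗[A] (⨂[A] (_ : Fin n), M) :=
      TensorProduct.congr (PiTensorProduct.subsingletonEquiv (0 : Fin 1)) (LinearEquiv.refl _ _)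
    exact Module.Flat.of_linearEquiv ((e1.trans e2).trans e3)

/-- Let `A` be a commutative ring containing `ℚ` and `M` a flat `A`-module.
Then for every `p`, the exterior power `⋀[A]^p M` is a flat `A`-module. -/
theorem stmt_2 {A : Type*} [CommRing A] [Algebra ℚ A]
    (M : Type*) [AddCommGroup M] [Module A M] [Module.Flat A M] (p : ℕ) :
    Module.Flat A (⋀[A]^p M) := by
  classical
  -- the alternating map `M^p → ⋀^p M`
  let altR : M [⋀^Fin p]→ₗ[A] (⋀[A]^p M) :=
    { toMultilinearMap := (ExteriorAlgebra.ιMulti A p).toMultilinearMap.codRestrict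
        (⋀[A]^p M) (fun v => ExteriorAlgebra.ιMulti_range A p ⟨v, rfl⟩)
      map_eq_zero_of_eq' := fun v i j h hij => Subtype.ext <| by
        simpa using (ExteriorAlgebra.ιMulti A p).map_eq_zero_of_eq v h hij }
  -- the projection from the tensor power to the exterior power
  let π : (⨂[A] (_ : Fin p), M) →ₗ[A] (⋀[A]^p M) :=
    PiTensorProduct.lift altR.toMultilinearMap
  -- the antisymmetrization, as an alternating map into the tensor power
  let alt : M [⋀^Fin p]→ₗ[A] (⨂[A] (_ : Fin p), M) :=
    MultilinearMap.alternatization (PiTensorProduct.tprod A)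
  let c : A := algebraMap ℚ A ((p.factorial : ℚ)⁻¹)
  let f : ∀ i, M [⋀^Fin i]→ₗ[A] (⨂[A] (_ : Fin p), M) :=
    Function.update (fun _ => 0) p (c • alt)
  let j : (⋀[A]^p M) →ₗ[A] (⨂[A] (_ : Fin p), M) :=
    (ExteriorAlgebra.liftAlternating f).comp (Submodule.subtype _)
  have hπtprod : ∀ v : Fin p → M, π (PiTensorProduct.tprod A v) = altR v := by
    intro v
    simp only [π, PiTensorProduct.lift.tprod]
    rfl
  have hπalt : ∀ v : Fin p → M, π (alt v) = (p.factorial : ℕ) • altR v := by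
    intro v
    have h1 : π.compMultilinearMap (PiTensorProduct.tprod A)
        = (altR : MultilinearMap A (fun _ : Fin p => M) (⋀[A]^p M)) := by
      ext w
      exact congrArg Subtype.val (hπtprod w)
    have h2 : MultilinearMap.alternatization (π.compMultilinearMap (PiTensorProduct.tprod A))
        = π.compAlternatingMap alt :=
      LinearMap.compMultilinearMap_alternatization π _
    have h3 : π.compAlternatingMap alt = (p.factorial : ℕ) • altR := by
      rw [← h2, h1, AlternatingMap.coe_alternatization, Fintype.card_fin]
    simpa using AlternatingMap.congr_fun h3 v
  have key : ∀ x : ⋀[A]^p M, π (j x) = x := by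
    intro x
    have hx : (x : ExteriorAlgebra A M) ∈
        Submodule.span A (Set.range (ExteriorAlgebra.ιMulti A p (M := M))) := by
      rw [ExteriorAlgebra.ιMulti_span_fixedDegree]
      exact x.2
    have main : ∀ y ∈ Submodule.span A (Set.range (ExteriorAlgebra.ιMulti A p (M := M))),
        ((π (ExteriorAlgebra.liftAlternating f y) : ExteriorAlgebra A M)) = y := by
      intro y hy
      induction hy using Submodule.span_induction with
      | mem z hz =>
        obtain ⟨v, rfl⟩ := hz
        rw [ExteriorAlgebra.liftAlternating_apply_ιMulti]
        have hf : f p = c • alt := by simp [f]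
        rw [hf]
        simp only [AlternatingMap.smul_apply, map_smul]
        rw [hπalt v]
        have hc : c • ((p.factorial : ℕ) • altR v) = altR v := by
          rw [smul_comm, ← Nat.cast_smul_eq_nsmul A, smul_smul]
          have h4 : ((p.factorial : ℕ) : A) * c = 1 := by
            have h5 : ((p.factorial : ℕ) : A) = algebraMap ℚ A (p.factorial : ℚ) := by
              simp
            rw [h5, show c = algebraMap ℚ A ((p.factorial : ℚ))⁻¹ from rfl, ← map_mul,
              mul_inv_cancel₀ (Nat.cast_ne_zero.mpr p.factorial_ne_zero), map_one]
          rw [h4, one_smul]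
        rw [hc]
        rfl
      | zero => simp
      | add a b _ _ ha hb => rw [map_add, map_add, Submodule.coe_add, ha, hb]
      | smul a x _ hx => rw [map_smul, map_smul, Submodule.coe_smul, hx]
    exact Subtype.ext (main x hx)
  have hT := flat_tensorPower (A := A) M p
  exact Module.Flat.of_retract j π (LinearMap.ext key)
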